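/- Let g : R^n → ℤ/pℤ and let d be a natural number with 0 ≤ d ≤ n(p^k−1). Then g is (d+1)-null if and only if g ∈ Ω_d^n. [g is called D-null if for every choice of r^{(1)}, …, r^{(D)} ∈ R^n, the iterated difference Δ_{r^{(1)}}∘⋯∘Δ_{r^{(D)}} g is identically zero, where Δ_r g(x) = g(x+r) − g(x).] -/

import Mathlib

set_option linter.unusedSectionVars false

open Finset

theorem choose_mod_pow (p : ℕ) [Fact p.Prime] : ∀ (k m a : ℕ), m < p ^ k →
    ((a.choose m : ZMod p)) = (((a % p ^ k).choose m : ℕ) : ZMod p) := by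
  intro k
  induction k with
  | zero =>
    intro m a hm
    have hm0 : m = 0 := Nat.lt_one_iff.mp (by simpa using hm)
    subst hm0
    simp
  | succ k ih =>
    intro m a hm
    have hp : 0 < p := (Fact.out (p := p.Prime)).pos
    have L1 : ((a.choose m : ℕ) : ZMod p)
        = (((a % p).choose (m % p) * (a / p).choose (m / p) : ℕ) : ZMod p) :=
      (ZMod.natCast_eq_natCast_iff _ _ _).mpr Choose.choose_modEq_choose_mod_mul_choose_div_nat
    have L2 : (((a % p ^ (k+1)).choose m : ℕ) : ZMod p)
        = ((((a % p ^ (k+1)) % p).choose (m % p) * ((a % p ^ (k+1)) / p).choose (m / p) : ℕ) : ZMod p) :=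
      (ZMod.natCast_eq_natCast_iff _ _ _).mpr Choose.choose_modEq_choose_mod_mul_choose_div_nat
    have h1 : (a % p ^ (k+1)) % p = a % p :=
      Nat.mod_mod_of_dvd a (dvd_pow_self p (Nat.succ_ne_zero k))
    have h2 : (a % p ^ (k+1)) / p = (a / p) % p ^ k := by
      rw [pow_succ, mul_comm]
      exact Nat.mod_mul_right_div_self a p (p ^ k)
    have h3 : m / p < p ^ k := by
      rw [Nat.div_lt_iff_lt_mul hp]
      calc m < p ^ (k+1) := hm
      _ = p ^ k * p := pow_succ p k
    rw [L1, L2, h1, h2]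
    push_cast
    rw [ih (m / p) (a / p) h3]

/-- The binomial phi function `φ_m : ℤ/p^kℤ → ℤ/pℤ`, `φ_m(x) = C(x̄, m) mod p`. -/
def phi (p k m : ℕ) (x : ZMod (p ^ k)) : ZMod p := (x.val.choose m : ZMod p)

/-- The multivariate phi function `φ_α(x) = φ_{α_1}(x_1)⋯φ_{α_n}(x_n)`. -/
def phiN (p k n : ℕ) (α : Fin n → ℕ) (x : Fin n → ZMod (p ^ k)) : ZMod p :=
  ∏ i, phi p k (α i) (x i)

section basic

variable (p k n : ℕ) [Fact p.Prime]

theorem pk_neZero : NeZero (p ^ k) :=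
  ⟨pow_ne_zero k (Fact.out (p := p.Prime)).ne_zero⟩

theorem phi_natCast {m : ℕ} (hm : m < p ^ k) (a : ℕ) :
    phi p k m (a : ZMod (p ^ k)) = (a.choose m : ZMod p) := by
  haveI := pk_neZero p k
  rw [phi, ZMod.val_natCast, ← choose_mod_pow p k m a hm]

theorem phi_big {m : ℕ} (hm : p ^ k ≤ m) (x : ZMod (p ^ k)) : phi p k m x = 0 := by
  haveI := pk_neZero p k
  rw [phi, Nat.choose_eq_zero_of_lt (lt_of_lt_of_le (ZMod.val_lt x) hm), Nat.cast_zero]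

theorem phi_zero (x : ZMod (p ^ k)) : phi p k 0 x = 1 := by simp [phi]

theorem phi_add {m : ℕ} (hm : m < p ^ k) (x y : ZMod (p ^ k)) :
    phi p k m (x + y) = ∑ j ∈ Finset.range (m + 1), phi p k j x * phi p k (m - j) y := by
  haveI := pk_neZero p k
  have hx : ((x.val : ℕ) : ZMod (p ^ k)) = x := ZMod.natCast_rightInverse x
  have hy : ((y.val : ℕ) : ZMod (p ^ k)) = y := ZMod.natCast_rightInverse y
  have hxy : x + y = (((x.val + y.val : ℕ)) : ZMod (p ^ k)) := by push_cast [hx, hy]; rfl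
  rw [hxy, phi_natCast p k hm, Nat.add_choose_eq]
  rw [Finset.Nat.sum_antidiagonal_eq_sum_range_succ (fun i j => x.val.choose i * y.val.choose j) m]
  push_cast
  rfl

theorem phi_succ {m : ℕ} (hm : m + 1 < p ^ k) (y : ZMod (p ^ k)) :
    phi p k (m + 1) (y + 1) = phi p k m y + phi p k (m + 1) y := by
  haveI := pk_neZero p k
  have hy : ((y.val : ℕ) : ZMod (p ^ k)) = y := ZMod.natCast_rightInverse y
  have hxy : y + 1 = (((y.val + 1 : ℕ)) : ZMod (p ^ k)) := by push_cast [hy]; rfl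
  rw [hxy, phi_natCast p k hm, Nat.choose_succ_succ]
  push_cast
  rfl

theorem phiN_add {α : Fin n → ℕ} (hα : ∀ i, α i < p ^ k) (x y : Fin n → ZMod (p ^ k)) :
    phiN p k n α (x + y) = ∑ β ∈ Fintype.piFinset (fun i => Finset.range (α i + 1)),
      (∏ i, phi p k (α i - β i) (y i)) * phiN p k n β x := by
  rw [phiN]
  have : ∀ i, phi p k (α i) ((x + y) i)
      = ∑ j ∈ Finset.range (α i + 1), phi p k j (x i) * phi p k (α i - j) (y i) := by
    intro i
    exact phi_add p k (hα i) (x i) (y i)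
  rw [Finset.prod_congr rfl (fun i _ => this i), Finset.prod_univ_sum]
  refine Finset.sum_congr rfl fun β _ => ?_
  rw [Finset.prod_mul_distrib, mul_comm, phiN]

end basic

/-- The difference operator. -/
def del (p k n : ℕ) (r : Fin n → ZMod (p ^ k)) (h : (Fin n → ZMod (p ^ k)) → ZMod p) :
    (Fin n → ZMod (p ^ k)) → ZMod p := fun x => h (x + r) - h x

section fold

variable (p k n : ℕ) [Fact p.Prime]

theorem del_zero (r : Fin n → ZMod (p ^ k)) : del p k n r 0 = 0 := by
  funext x; simp [del]

theorem foldr_del_zero (l : List (Fin n → ZMod (p ^ k))) : l.foldr (del p k n) 0 = 0 := by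
  induction l with
  | nil => rfl
  | cons r l ih => simp [List.foldr_cons, ih, del_zero]

theorem del_add (r : Fin n → ZMod (p ^ k)) (g h : (Fin n → ZMod (p ^ k)) → ZMod p) :
    del p k n r (g + h) = del p k n r g + del p k n r h := by
  funext x; simp [del]; ring

theorem del_smul (r : Fin n → ZMod (p ^ k)) (c : ZMod p) (g : (Fin n → ZMod (p ^ k)) → ZMod p) :
    del p k n r (c • g) = c • del p k n r g := by
  funext x; simp [del, smul_sub]; ring

theorem foldr_del_smul (l : List (Fin n → ZMod (p ^ k))) (c : ZMod p)
    (g : (Fin n → ZMod (p ^ k)) → ZMod p) :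
    l.foldr (del p k n) (c • g) = c • l.foldr (del p k n) g := by
  induction l with
  | nil => rfl
  | cons r l ih => simp [List.foldr_cons, ih, del_smul]

theorem foldr_del_sum {ι : Type*} (l : List (Fin n → ZMod (p ^ k))) (s : Finset ι)
    (F : ι → (Fin n → ZMod (p ^ k)) → ZMod p) :
    l.foldr (del p k n) (∑ i ∈ s, F i) = ∑ i ∈ s, l.foldr (del p k n) (F i) := by
  induction l with
  | nil => rfl
  | cons r l ih =>
    simp only [List.foldr_cons, ih]
    funext x
    simp [del, Finset.sum_apply, Finset.sum_sub_distrib]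

end fold

section steps

variable (p k n : ℕ) [Fact p.Prime]

theorem del_single (i : Fin n) {β : Fin n → ℕ} (hβ : ∀ j, β j < p ^ k) :
    del p k n (Pi.single i 1) (phiN p k n β) =
      if β i = 0 then 0 else phiN p k n (Function.update β i (β i - 1)) := by
  funext x
  set e : Fin n → ZMod (p ^ k) := Pi.single i 1 with he
  have key : ∀ (γ : Fin n → ℕ) (z : Fin n → ZMod (p ^ k)),
      phiN p k n γ z = phi p k (γ i) (z i) * ∏ j ∈ Finset.univ.erase i, phi p k (γ j) (z j) := by
    intro γ z
    rw [phiN, ← Finset.mul_prod_erase Finset.univ _ (Finset.mem_univ i)]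
  have hrest : ∏ j ∈ Finset.univ.erase i, phi p k (β j) ((x + e) j)
      = ∏ j ∈ Finset.univ.erase i, phi p k (β j) (x j) := by
    refine Finset.prod_congr rfl fun j hj => ?_
    have hji : j ≠ i := Finset.ne_of_mem_erase hj
    simp [he, Pi.single_eq_of_ne hji]
  have hxi : (x + e) i = x i + 1 := by simp [he]
  rcases Nat.eq_zero_or_pos (β i) with h0 | hpos
  · rw [if_pos h0, del]
    rw [key β (x + e), key β x, hrest, h0, phi_zero, phi_zero]
    simp
  · rw [if_neg (Nat.pos_iff_ne_zero.mp hpos), del]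
    have hβi : β i - 1 + 1 = β i := Nat.succ_pred_eq_of_pos hpos
    have hstep : phi p k (β i) (x i + 1) = phi p k (β i - 1) (x i) + phi p k (β i) (x i) := by
      conv_lhs => rw [← hβi]
      rw [phi_succ p k (by rw [hβi]; exact hβ i), hβi]
    have hupd : phiN p k n (Function.update β i (β i - 1)) x
        = phi p k (β i - 1) (x i) * ∏ j ∈ Finset.univ.erase i, phi p k (β j) (x j) := by
      rw [key (Function.update β i (β i - 1)) x, Function.update_self]
      congr 1
      refine Finset.prod_congr rfl fun j hj => ?_
      rw [Function.update_of_ne (Finset.ne_of_mem_erase hj)]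
    rw [key β (x + e), key β x, hrest, hxi, hstep, hupd]
    ring

theorem foldr_replicate (i : Fin n) (m : ℕ) {β : Fin n → ℕ} (hβ : ∀ j, β j < p ^ k) :
    (List.replicate m (Pi.single i (1 : ZMod (p ^ k)))).foldr (del p k n) (phiN p k n β) =
      if m ≤ β i then phiN p k n (fun j => if j = i then β j - m else β j) else 0 := by
  induction m with
  | zero =>
    have hfun : (fun j => if j = i then β j - 0 else β j) = β := by
      funext j
      simp
    rw [hfun, List.replicate_zero, List.foldr_nil, if_pos (Nat.zero_le _)]
  | succ m ih =>
    rw [List.replicate_succ, List.foldr_cons, ih]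
    by_cases hm : m ≤ β i
    · rw [if_pos hm]
      have hβ'lt : ∀ j, (fun j => if j = i then β j - m else β j) j < p ^ k := by
        intro j
        dsimp only
        split
        · exact lt_of_le_of_lt (Nat.sub_le _ _) (hβ j)
        · exact hβ j
      rw [del_single p k n i hβ'lt]
      by_cases h1 : m + 1 ≤ β i
      · rw [if_neg (by rw [if_pos rfl]; omega), if_pos h1]
        refine congrArg (phiN p k n) ?_
        funext j
        by_cases hji : j = i
        · subst hji
          rw [Function.update_self, if_pos rfl, if_pos rfl]
          omega
        · rw [Function.update_of_ne hji, if_neg hji, if_neg hji]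
      · rw [if_pos (by rw [if_pos rfl]; omega), if_neg h1]
    · rw [if_neg hm, if_neg (by omega), del_zero]

end steps

section flat

variable (p k n : ℕ) [Fact p.Prime]

theorem foldr_flatMap (α : Fin n → ℕ) :
    ∀ (L : List (Fin n)), L.Nodup → ∀ (β : Fin n → ℕ), (∀ j, β j < p ^ k) →
    ((L.flatMap fun i => List.replicate (α i) (Pi.single i (1 : ZMod (p ^ k)))).foldr
        (del p k n) (phiN p k n β)) =
      if ∀ i ∈ L, α i ≤ β i then phiN p k n (fun j => if j ∈ L then β j - α j else β j)
      else 0 := by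
  intro L
  induction L with
  | nil =>
    intro _ β hβ
    rw [if_pos (by simp)]
    simp only [List.flatMap_nil, List.foldr_nil]
    refine congrArg (phiN p k n) ?_
    funext j
    simp
  | cons i L ih =>
    intro hnd β hβ
    have hndL : L.Nodup := (List.nodup_cons.mp hnd).2
    have hiL : i ∉ L := (List.nodup_cons.mp hnd).1
    rw [List.flatMap_cons, List.foldr_append, ih hndL β hβ]
    by_cases hc : ∀ j ∈ L, α j ≤ β j
    · rw [if_pos hc]
      have hβ'lt : ∀ j, (fun j => if j ∈ L then β j - α j else β j) j < p ^ k := by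
        intro j
        dsimp only
        split
        · exact lt_of_le_of_lt (Nat.sub_le _ _) (hβ j)
        · exact hβ j
      rw [foldr_replicate p k n i (α i) hβ'lt]
      have hβ'i : (if i ∈ L then β i - α i else β i) = β i := if_neg hiL
      by_cases hci : α i ≤ β i
      · rw [if_pos (by rw [hβ'i]; exact hci),
          if_pos (by intro j hj; rcases List.mem_cons.mp hj with rfl | hj
                     exacts [hci, hc j hj])]
        refine congrArg (phiN p k n) ?_
        funext j
        by_cases hji : j = i
        · subst hji
          rw [if_pos rfl, if_pos (List.mem_cons_self (a := j) (l := L)), if_neg hiL]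
        · rw [if_neg hji]
          by_cases hjL : j ∈ L
          · rw [if_pos hjL, if_pos (List.mem_cons_of_mem i hjL)]
          · rw [if_neg hjL, if_neg (by simp [hji, hjL])]
      · rw [if_neg (by rw [hβ'i]; exact hci),
          if_neg (by intro h; exact hci (h i (List.mem_cons_self (a := i) (l := L))))]
    · rw [if_neg hc, foldr_del_zero,
        if_neg (by intro h; exact hc fun j hj => h j (List.mem_cons_of_mem i hj))]

/-- The canonical list of difference directions realizing `D^α`. -/
def lst (p k n : ℕ) (α : Fin n → ℕ) : List (Fin n → ZMod (p ^ k)) :=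
  (List.finRange n).flatMap fun i => List.replicate (α i) (Pi.single i (1 : ZMod (p ^ k)))

theorem lst_length (α : Fin n → ℕ) : (lst p k n α).length = ∑ i, α i := by
  rw [lst, List.length_flatMap, Fin.sum_univ_def]
  congr 1
  refine List.map_congr_left fun i _ => ?_
  simp

theorem foldr_lst (α β : Fin n → ℕ) (hβ : ∀ j, β j < p ^ k) :
    (lst p k n α).foldr (del p k n) (phiN p k n β) =
      if ∀ i, α i ≤ β i then phiN p k n (fun j => β j - α j) else 0 := by
  rw [lst, foldr_flatMap p k n α (List.finRange n) (List.nodup_finRange n) β hβ]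
  have h1 : (∀ i ∈ List.finRange n, α i ≤ β i) ↔ ∀ i, α i ≤ β i := by
    simp [List.mem_finRange]
  by_cases hc : ∀ i, α i ≤ β i
  · rw [if_pos (h1.mpr hc), if_pos hc]
    refine congrArg (phiN p k n) ?_
    funext j
    rw [if_pos (List.mem_finRange j)]
  · rw [if_neg (fun h => hc (h1.mp h)), if_neg hc]

end flat

section extractsec

variable (p k n : ℕ) [Fact p.Prime]

theorem phiN_zero_pt (γ : Fin n → ℕ) :
    phiN p k n γ 0 = if ∀ i, γ i = 0 then 1 else 0 := by
  haveI := pk_neZero p k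
  have hphi : ∀ m : ℕ, phi p k m (0 : ZMod (p ^ k)) = if m = 0 then 1 else 0 := by
    intro m
    rcases Nat.eq_zero_or_pos m with rfl | hm
    · simp [phi]
    · rw [if_neg (Nat.pos_iff_ne_zero.mp hm), phi, ZMod.val_zero,
        Nat.choose_eq_zero_of_lt hm, Nat.cast_zero]
  by_cases hγ : ∀ i, γ i = 0
  · rw [if_pos hγ, phiN]
    rw [Finset.prod_congr rfl fun i _ => by rw [Pi.zero_apply, hphi, if_pos (hγ i)]]
    simp
  · push_neg at hγ
    obtain ⟨i, hi⟩ := hγ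
    rw [if_neg (by push_neg; exact ⟨i, hi⟩), phiN]
    refine Finset.prod_eq_zero (Finset.mem_univ i) ?_
    rw [Pi.zero_apply, hphi, if_neg hi]

theorem extract (c : (Fin n → Fin (p ^ k)) → ZMod p) (γ₀ : Fin n → Fin (p ^ k)) :
    ((lst p k n fun i => (γ₀ i : ℕ)).foldr (del p k n)
      (∑ γ : Fin n → Fin (p ^ k), c γ • phiN p k n fun i => (γ i : ℕ))) 0 = c γ₀ := by
  rw [foldr_del_sum]
  have hterm : ∀ γ : Fin n → Fin (p ^ k),
      ((lst p k n fun i => (γ₀ i : ℕ)).foldr (del p k n)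
        (c γ • phiN p k n fun i => (γ i : ℕ))) 0 = if γ = γ₀ then c γ else 0 := by
    intro γ
    rw [foldr_del_smul, foldr_lst p k n _ _ (fun j => (γ j).isLt)]
    by_cases hγ : γ = γ₀
    · subst hγ
      rw [if_pos (fun i => le_refl _), Pi.smul_apply, phiN_zero_pt,
        if_pos (fun i => Nat.sub_self _), if_pos rfl, smul_eq_mul, mul_one]
    · rw [if_neg hγ]
      by_cases hle : ∀ i, (γ₀ i : ℕ) ≤ (γ i : ℕ)
      · rw [if_pos hle, Pi.smul_apply, phiN_zero_pt, if_neg, smul_eq_mul, mul_zero]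
        intro hall
        apply hγ
        funext i
        have h0 : (γ i : ℕ) - (γ₀ i : ℕ) = 0 := hall i
        have h1 := hle i
        exact Fin.ext (by omega)
      · rw [if_neg hle]
        simp
  rw [Finset.sum_apply, Finset.sum_congr rfl fun γ _ => hterm γ,
    Finset.sum_ite_eq' Finset.univ γ₀ c, if_pos (Finset.mem_univ γ₀)]

end extractsec

section spansec

variable (p k n : ℕ) [Fact p.Prime]

theorem box_li :
    LinearIndependent (ZMod p)
      (fun γ : Fin n → Fin (p ^ k) => phiN p k n fun i => (γ i : ℕ)) := by
  rw [Fintype.linearIndependent_iff]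
  intro c hc γ₀
  have h := extract p k n c γ₀
  rw [hc, foldr_del_zero] at h
  exact h.symm

theorem box_span :
    Submodule.span (ZMod p)
      (Set.range fun γ : Fin n → Fin (p ^ k) => phiN p k n fun i => (γ i : ℕ)) = ⊤ := by
  haveI := pk_neZero p k
  refine LinearIndependent.span_eq_top_of_card_eq_finrank' (box_li p k n) ?_
  rw [Module.finrank_fintype_fun_eq_card]
  rw [Fintype.card_fun, Fintype.card_fun, Fintype.card_fin, ZMod.card, Fintype.card_fin]

end spansec

section delmem

variable (p k n : ℕ) [Fact p.Prime]

theorem phiN_big {α : Fin n → ℕ} (i : Fin n) (hi : p ^ k ≤ α i) : phiN p k n α = 0 := by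
  funext x
  exact Finset.prod_eq_zero (Finset.mem_univ i) (phi_big p k hi (x i))

theorem del_mem (m : ℕ) {α : Fin n → ℕ} (hα : (∑ i, α i) ≤ m + 1) (r : Fin n → ZMod (p ^ k)) :
    del p k n r (phiN p k n α) ∈ Submodule.span (ZMod p)
      {f : (Fin n → ZMod (p ^ k)) → ZMod p |
        ∃ β : Fin n → ℕ, (∑ i, β i) ≤ m ∧ f = phiN p k n β} := by
  by_cases hbig : ∃ i, p ^ k ≤ α i
  · obtain ⟨i, hi⟩ := hbig
    rw [phiN_big p k n i hi, del_zero]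
    exact Submodule.zero_mem _
  · push_neg at hbig
    have hmem : α ∈ Fintype.piFinset fun i => Finset.range (α i + 1) := by
      rw [Fintype.mem_piFinset]
      intro i
      exact Finset.mem_range.mpr (Nat.lt_succ_self _)
    have keyfun : del p k n r (phiN p k n α) =
        ∑ β ∈ (Fintype.piFinset fun i => Finset.range (α i + 1)).erase α,
          (∏ i, phi p k (α i - β i) (r i)) • phiN p k n β := by
      funext x
      rw [del]
      rw [phiN_add p k n hbig x r]
      have hα1 : (∏ i, phi p k (α i - α i) (r i)) * phiN p k n α x = phiN p k n α x := by
        rw [Finset.prod_congr rfl fun i _ => by rw [Nat.sub_self, phi_zero], Finset.prod_const_one,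
          one_mul]
      rw [← Finset.sum_erase_add _ _ hmem, hα1, add_sub_cancel_right, Finset.sum_apply]
      refine Finset.sum_congr rfl fun β _ => ?_
      rw [Pi.smul_apply, smul_eq_mul]
    rw [keyfun]
    refine Submodule.sum_mem _ fun β hβ => Submodule.smul_mem _ _ (Submodule.subset_span ?_)
    refine ⟨β, ?_, rfl⟩
    have hβ' := Fintype.mem_piFinset.mp (Finset.mem_of_mem_erase hβ)
    have hβle : ∀ i, β i ≤ α i := fun i => Nat.lt_succ_iff.mp (Finset.mem_range.mp (hβ' i))
    have hβne : β ≠ α := Finset.ne_of_mem_erase hβ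
    obtain ⟨i0, hi0⟩ := Function.ne_iff.mp hβne
    have hlt : (∑ i, β i) < ∑ i, α i :=
      Finset.sum_lt_sum (fun i _ => hβle i)
        ⟨i0, Finset.mem_univ i0, lt_of_le_of_ne (hβle i0) hi0⟩
    omega

end delmem

section nullsec

variable (p k n : ℕ) [Fact p.Prime]

theorem null_of_mem : ∀ (m : ℕ) (g : (Fin n → ZMod (p ^ k)) → ZMod p),
    g ∈ Submodule.span (ZMod p)
      {f : (Fin n → ZMod (p ^ k)) → ZMod p |
        ∃ β : Fin n → ℕ, (∑ i, β i) ≤ m ∧ f = phiN p k n β} →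
    ∀ l : List (Fin n → ZMod (p ^ k)), l.length = m + 1 → l.foldr (del p k n) g = 0 := by
  intro m
  induction m with
  | zero =>
    intro g hg
    refine Submodule.span_induction ?_ ?_ ?_ ?_ hg
    · rintro f ⟨β, hβ, rfl⟩ l hl
      obtain ⟨r, rfl⟩ := List.length_eq_one_iff.mp hl
      have hβ0 : ∀ i, β i = 0 := by
        intro i
        have := Finset.sum_eq_zero_iff.mp (Nat.le_zero.mp hβ) i (Finset.mem_univ i)
        exact this
      have : phiN p k n β = fun _ => 1 := by
        funext x
        rw [phiN, Finset.prod_congr rfl fun i _ => by rw [hβ0 i, phi_zero],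
          Finset.prod_const_one]
      rw [this]
      funext x
      simp [List.foldr_cons, del]
    · intro l hl
      exact foldr_del_zero p k n l
    · intro f₁ f₂ _ _ h₁ h₂ l hl
      obtain ⟨r, rfl⟩ := List.length_eq_one_iff.mp hl
      have e1 := h₁ [r] rfl
      have e2 := h₂ [r] rfl
      simp only [List.foldr_cons, List.foldr_nil] at e1 e2 ⊢
      rw [del_add, e1, e2, add_zero]
    · intro a f _ h l hl
      obtain ⟨r, rfl⟩ := List.length_eq_one_iff.mp hl
      have e := h [r] rfl
      simp only [List.foldr_cons, List.foldr_nil] at e ⊢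
      rw [del_smul, e, smul_zero]
  | succ m ih =>
    intro g hg l hl
    rcases List.eq_nil_or_concat' l with rfl | ⟨l', r, rfl⟩
    · simp at hl
    · rw [List.foldr_append]
      have hstep : l'.foldr (del p k n) ((del p k n r) g) = 0 := by
        refine ih (del p k n r g) ?_ l' ?_
        · refine Submodule.span_induction ?_ ?_ ?_ ?_ hg
          · rintro f ⟨β, hβ, rfl⟩
            exact del_mem p k n m hβ r
          · rw [del_zero]
            exact Submodule.zero_mem _
          · intro f₁ f₂ _ _ h₁ h₂
            rw [del_add]
            exact Submodule.add_mem _ h₁ h₂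
          · intro a f _ h
            rw [del_smul]
            exact Submodule.smul_mem _ _ h
        · have := hl
          rw [List.length_append, List.length_cons, List.length_nil] at this
          omega
      simpa using hstep

end nullsec

/-- For `g : R^n → ℤ/pℤ` and `0 ≤ d ≤ n(p^k−1)`: `g` is `(d+1)`-null
(all iterated differences of order `d+1` vanish identically) iff `g ∈ Ω_d^n`. -/
theorem stmt_16 (p k n d : ℕ) [Fact p.Prime] (hk : 1 ≤ k) (hd : d ≤ n * (p ^ k - 1))
    (g : (Fin n → ZMod (p ^ k)) → ZMod p) :
    (∀ l : List (Fin n → ZMod (p ^ k)), l.length = d + 1 →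
      l.foldr (fun r h => fun x => h (x + r) - h x) g = 0) ↔
    g ∈ Submodule.span (ZMod p)
      {f : (Fin n → ZMod (p ^ k)) → ZMod p |
        ∃ α : Fin n → ℕ, (∑ i, α i) ≤ d ∧ f = phiN p k n α} := by
  constructor
  · intro h
    have hg : g ∈ Submodule.span (ZMod p)
        (Set.range fun γ : Fin n → Fin (p ^ k) => phiN p k n fun i => (γ i : ℕ)) := by
      rw [box_span p k n]
      exact Submodule.mem_top
    obtain ⟨c, hc⟩ := (Submodule.mem_span_range_iff_exists_fun (ZMod p)).mp hg
    have hczero : ∀ γ : Fin n → Fin (p ^ k), ¬((∑ i, (γ i : ℕ)) ≤ d) → c γ = 0 := by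
      intro γ hγ
      have hlen := lst_length p k n (fun i => (γ i : ℕ))
      have hge : d + 1 ≤ ∑ i, (γ i : ℕ) := by omega
      have hfold : (lst p k n fun i => (γ i : ℕ)).foldr (del p k n) g = 0 := by
        set t := (∑ i, (γ i : ℕ)) - (d + 1) with ht
        have hsplit : lst p k n (fun i => (γ i : ℕ)) =
            (lst p k n fun i => (γ i : ℕ)).take t ++ (lst p k n fun i => (γ i : ℕ)).drop t :=
          (List.take_append_drop t _).symm
        rw [hsplit, List.foldr_append]
        have hdrop : ((lst p k n fun i => (γ i : ℕ)).drop t).foldr (del p k n) g = 0 :=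
          h _ (by rw [List.length_drop, hlen]; omega)
        rw [hdrop]
        exact foldr_del_zero p k n _
      have hex := extract p k n c γ
      rw [hc, hfold] at hex
      exact hex.symm
    rw [← hc]
    refine Submodule.sum_mem _ fun γ _ => ?_
    by_cases hγ : (∑ i, (γ i : ℕ)) ≤ d
    · exact Submodule.smul_mem _ _ (Submodule.subset_span ⟨fun i => (γ i : ℕ), hγ, rfl⟩)
    · rw [hczero γ hγ, zero_smul]
      exact Submodule.zero_mem _
  · intro hg l hl
    exact null_of_mem p k n d g hg l hl
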